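/- Let K be a tensor-triangulated category with internal hom, and let E be a proper class of triangles in K. If E is hom-closed (closed under hom(W,−) for all W ∈ K) then proj(E) is closed under tensoring with arbitrary objects, and hence the ideal of maps factoring through proj(E) is tensor-closed. Dually, if E is closed under tensoring with arbitrary objects then inj(E) is hom-closed, and the ideal of maps factoring through inj(E) is hom-closed. If moreover E has enough projectives (respectively enough injectives), these implications become equivalences. -/

import Mathlib

/-!
Common definitions for formalizing "Relative stable categories and birationality"
(Balmer–Stevenson): proper classes of triangles in the sense of Beligiannis,
relative projectives/injectives, Frobenius classes, and abstract models of the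
relative stable category together with Beligiannis' triangulation.
-/

noncomputable section

open CategoryTheory Limits Pretriangulated ZeroObject

universe v u v' u' v'' u'' v₁ u₁ v₂ u₂

namespace RelStable

variable {K : Type u} [Category.{v} K] [Preadditive K] [HasZeroObject K]
  [HasShift K ℤ] [∀ n : ℤ, (CategoryTheory.shiftFunctor K n).Additive] [Pretriangulated K]

/-- `f` is an `E`-monomorphism: it occurs as the first map of a triangle in `E`. -/
def SMono (E : Set (Triangle K)) {X Y : K} (f : X ⟶ Y) : Prop :=
  ∃ (Z : K) (g : Y ⟶ Z) (h : Z ⟶ X⟦(1:ℤ)⟧), Triangle.mk f g h ∈ E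

/-- `g` is an `E`-epimorphism: it occurs as the second map of a triangle in `E`. -/
def SEpi (E : Set (Triangle K)) {Y Z : K} (g : Y ⟶ Z) : Prop :=
  ∃ (X : K) (f : X ⟶ Y) (h : Z ⟶ X⟦(1:ℤ)⟧), Triangle.mk f g h ∈ E

/-- `h` is an `E`-phantom: up to isomorphism of its target with a suspension, it
occurs as the third map of a triangle in `E`. -/
def SPhantom (E : Set (Triangle K)) {Z W : K} (h : Z ⟶ W) : Prop :=
  ∃ (X Y : K) (f : X ⟶ Y) (g : Y ⟶ Z) (h' : Z ⟶ X⟦(1:ℤ)⟧) (e : (X⟦(1:ℤ)⟧ : K) ≅ W),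
    Triangle.mk f g h' ∈ E ∧ h = h' ≫ e.hom

/-- `P` is `E`-projective: `Hom(P,-)` takes triangles in `E` to short exact sequences. -/
def EProjective (E : Set (Triangle K)) (P : K) : Prop :=
  ∀ T ∈ E,
    (∀ a : P ⟶ T.obj₁, a ≫ T.mor₁ = 0 → a = 0) ∧
    (∀ b : P ⟶ T.obj₂, b ≫ T.mor₂ = 0 → ∃ a : P ⟶ T.obj₁, a ≫ T.mor₁ = b) ∧
    (∀ c : P ⟶ T.obj₃, ∃ b : P ⟶ T.obj₂, b ≫ T.mor₂ = c)

/-- `I` is `E`-injective: `Hom(-,I)` takes triangles in `E` to short exact sequences. -/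
def EInjective (E : Set (Triangle K)) (I : K) : Prop :=
  ∀ T ∈ E,
    (∀ a : T.obj₃ ⟶ I, T.mor₂ ≫ a = 0 → a = 0) ∧
    (∀ b : T.obj₂ ⟶ I, T.mor₁ ≫ b = 0 → ∃ a : T.obj₃ ⟶ I, T.mor₂ ≫ a = b) ∧
    (∀ c : T.obj₁ ⟶ I, ∃ b : T.obj₂ ⟶ I, T.mor₁ ≫ b = c)

/-- `K` has enough `E`-projectives: every object admits an `E`-projective precover. -/
def EnoughProjectives (E : Set (Triangle K)) : Prop :=
  ∀ X : K, ∃ (P : K) (p : P ⟶ X), EProjective E P ∧ SEpi E p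

/-- `K` has enough `E`-injectives: every object admits an `E`-injective preenvelope. -/
def EnoughInjectives (E : Set (Triangle K)) : Prop :=
  ∀ X : K, ∃ (I : K) (i : X ⟶ I), EInjective E I ∧ SMono E i

/-- The direct sum of two triangles. -/
def sumTriangle [HasBinaryBiproducts K] (T₁ T₂ : Triangle K) : Triangle K :=
  Triangle.mk (biprod.map T₁.mor₁ T₂.mor₁) (biprod.map T₁.mor₂ T₂.mor₂)
    (biprod.desc (T₁.mor₃ ≫ (shiftFunctor K (1:ℤ)).map biprod.inl)
      (T₂.mor₃ ≫ (shiftFunctor K (1:ℤ)).map biprod.inr))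

/-- A proper class of triangles in the sense of Beligiannis: a class of distinguished
triangles closed under isomorphism, suspension, finite direct sums and retracts,
containing the trivial triangles, whose `E`-monomorphisms are closed under homotopy
pushout, whose `E`-epimorphisms are closed under homotopy pullback, and which is
saturated. -/
structure IsProperClass [HasBinaryBiproducts K] (E : Set (Triangle K)) : Prop where
  subset_dist : ∀ T ∈ E, T ∈ (distTriang K)
  iso_closed : ∀ (T₁ T₂ : Triangle K), (T₁ ≅ T₂) → T₁ ∈ E → T₂ ∈ E
  shift_closed : ∀ T ∈ E, (Triangle.shiftFunctor K (1 : ℤ)).obj T ∈ E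
  sum_closed : ∀ T₁ T₂ : Triangle K, T₁ ∈ E → T₂ ∈ E → sumTriangle T₁ T₂ ∈ E
  retract_closed : ∀ (T₁ T₂ : Triangle K) (i : T₁ ⟶ T₂) (r : T₂ ⟶ T₁),
    i ≫ r = 𝟙 T₁ → T₂ ∈ E → T₁ ∈ E
  contractible₁ : ∀ X : K, contractibleTriangle X ∈ E
  contractible₂ : ∀ Y : K,
    Triangle.mk (0 : (0 : K) ⟶ Y) (𝟙 Y) (0 : Y ⟶ ((0 : K)⟦(1:ℤ)⟧)) ∈ E
  mono_pushout : ∀ {X Y X' : K} (f : X ⟶ Y), SMono E f → ∀ (t : X ⟶ X')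
    (W : K) (u : Y ⊞ X' ⟶ W) (v : W ⟶ X⟦(1:ℤ)⟧),
    Triangle.mk (biprod.lift f t) u v ∈ (distTriang K) → SMono E (biprod.inr ≫ u)
  epi_pullback : ∀ {Y Z Z' : K} (g : Y ⟶ Z), SEpi E g → ∀ (t : Z' ⟶ Z)
    (W : K) (w : W ⟶ Y ⊞ Z') (v : Z ⟶ W⟦(1:ℤ)⟧),
    Triangle.mk w (biprod.desc g t) v ∈ (distTriang K) → SEpi E (w ≫ biprod.snd)
  saturated : ∀ {Y Z : K} (g : Y ⟶ Z), SEpi E g → ∀ {W : K} (k : Z ⟶ W),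
    SPhantom E (g ≫ k) → SPhantom E k

/-- A Frobenius class of triangles: enough projectives, enough injectives, and the
projectives coincide with the injectives. -/
structure IsFrobenius (E : Set (Triangle K)) : Prop where
  enough_proj : EnoughProjectives E
  enough_inj : EnoughInjectives E
  proj_eq_inj : ∀ X : K, EProjective E X ↔ EInjective E X

/-- A morphism factoring through an `E`-projective(-injective) object; these are the
morphisms killed by the quotient functor to the relative stable category. -/
def FactorsThroughProj (E : Set (Triangle K)) {X Y : K} (f : X ⟶ Y) : Prop :=
  ∃ (P : K) (a : X ⟶ P) (b : P ⟶ Y), EProjective E P ∧ a ≫ b = f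

/-- The image of a triangle under a functor equipped with a commutation with shift. -/
def mapTri {C : Type u'} {D : Type v'} [Category C] [Category D]
    [HasShift C ℤ] [HasShift D ℤ] (F : C ⥤ D) (hc : F.CommShift ℤ) (T : Triangle C) :
    Triangle D :=
  Triangle.mk (F.map T.mor₁) (F.map T.mor₂)
    (F.map T.mor₃ ≫ (Functor.CommShift.commShiftIso (self := hc) F (1:ℤ)).hom.app T.obj₁)

/-- An exact (triangulated) functor: additive, commutes with the shift, and sends
distinguished triangles to distinguished triangles. -/
def IsExactFunctor {C : Type u'} {D : Type v'} [Category C] [Category D]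
    [Preadditive C] [Preadditive D] [HasZeroObject C] [HasZeroObject D]
    [HasShift C ℤ] [HasShift D ℤ]
    [∀ n : ℤ, (shiftFunctor C n).Additive] [∀ n : ℤ, (shiftFunctor D n).Additive]
    [Pretriangulated C] [Pretriangulated D] (F : C ⥤ D) : Prop :=
  F.Additive ∧ ∃ hc : F.CommShift ℤ, ∀ T ∈ (distTriang C), mapTri F hc T ∈ (distTriang D)

/-- An abstract model of the relative stable category `S(K;E) = K/proj(E)` together
with Beligiannis' triangulation: a pretriangulated category `S` and an additive
quotient functor `π : K ⥤ S` killing exactly the maps factoring through `proj(E)`,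
such that the suspension of `S` is computed by cofibres of `inj(E)`-preenvelopes,
image-triangles of triangles of `E` are distinguished, and every distinguished
triangle of `S` is isomorphic to such an image-triangle. -/
structure StableModel (E : Set (Triangle K)) where
  S : Type u
  [cat : Category.{v} S]
  [preadd : Preadditive S]
  [zobj : HasZeroObject S]
  [hshift : HasShift S ℤ]
  [shiftAdd : ∀ n : ℤ, (shiftFunctor S n).Additive]
  [pretri : Pretriangulated S]
  π : K ⥤ S
  [πAdd : π.Additive]
  π_full : π.Full
  π_essSurj : π.EssSurj
  π_map_zero_iff : ∀ {X Y : K} (f : X ⟶ Y), π.map f = 0 ↔ FactorsThroughProj E f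
  susp : ∀ T ∈ E, EInjective E T.obj₂ →
    Nonempty (π.obj T.obj₃ ≅ (π.obj T.obj₁)⟦(1:ℤ)⟧)
  imageTriangle_distinguished : ∀ T ∈ E,
    ∃ h' : π.obj T.obj₃ ⟶ (π.obj T.obj₁)⟦(1:ℤ)⟧,
      Triangle.mk (π.map T.mor₁) (π.map T.mor₂) h' ∈ (distTriang S)
  distinguished_iso_image : ∀ T' ∈ (distTriang S), ∃ T ∈ E,
    ∃ h' : π.obj T.obj₃ ⟶ (π.obj T.obj₁)⟦(1:ℤ)⟧,
      Triangle.mk (π.map T.mor₁) (π.map T.mor₂) h' ∈ (distTriang S) ∧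
      Nonempty (T' ≅ Triangle.mk (π.map T.mor₁) (π.map T.mor₂) h')

attribute [instance] StableModel.cat StableModel.preadd StableModel.zobj
  StableModel.hshift StableModel.shiftAdd StableModel.pretri StableModel.πAdd


/-- A morphism factoring through an `E`-injective object. -/
def FactorsThroughInj (E : Set (Triangle K)) {X Y : K} (f : X ⟶ Y) : Prop :=
  ∃ (I : K) (a : X ⟶ I) (b : I ⟶ Y), EInjective E I ∧ a ≫ b = f

/-- The `F`-split triangles: distinguished triangles whose third map is killed by `F`. -/
def splitClass {C : Type u'} {D : Type v'} [Category C] [Category D] [Preadditive C]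
    [HasZeroObject C] [HasShift C ℤ] [∀ n : ℤ, (shiftFunctor C n).Additive]
    [Pretriangulated C] [Limits.HasZeroMorphisms D] (F : C ⥤ D) : Set (Triangle C) :=
  {T | T ∈ (distTriang C) ∧ F.map T.mor₃ = 0}

open MonoidalCategory in
/-- A tensor-triangulated structure: tensoring on either side is exact (commutes with
the shift and preserves distinguished triangles), and the two commutation isomorphisms
satisfy the usual Koszul sign rule. -/
def TensorTriangulatedOn (C : Type u') [Category.{v'} C] [Preadditive C] [HasZeroObject C]
    [HasShift C ℤ] [∀ n : ℤ, (shiftFunctor C n).Additive] [Pretriangulated C]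
    [MonoidalCategory C] : Prop :=
  ∃ (cL : ∀ X : C, (tensorLeft X).CommShift ℤ)
    (cR : ∀ X : C, (tensorRight X).CommShift ℤ),
    (∀ X : C, ∀ T ∈ (distTriang C), mapTri (tensorLeft X) (cL X) T ∈ (distTriang C)) ∧
    (∀ X : C, ∀ T ∈ (distTriang C), mapTri (tensorRight X) (cR X) T ∈ (distTriang C)) ∧
    (∀ X Y : C,
      (Functor.CommShift.commShiftIso (self := cL ((X⟦(1:ℤ)⟧ : C))) (tensorLeft ((X⟦(1:ℤ)⟧ : C))) (1:ℤ)).hom.app Y ≫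
          (shiftFunctor C (1:ℤ)).map ((Functor.CommShift.commShiftIso (self := cR Y) (tensorRight Y) (1:ℤ)).hom.app X) =
        -((Functor.CommShift.commShiftIso (self := cR ((Y⟦(1:ℤ)⟧ : C))) (tensorRight ((Y⟦(1:ℤ)⟧ : C))) (1:ℤ)).hom.app X ≫
          (shiftFunctor C (1:ℤ)).map ((Functor.CommShift.commShiftIso (self := cL X) (tensorLeft X) (1:ℤ)).hom.app Y)))

section TTK

variable [MonoidalCategory K]

open MonoidalCategory

/-- `E` is closed under tensoring, expressed on the ideal of `E`-phantoms. -/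
def TensorClosedClass (E : Set (Triangle K)) : Prop :=
  ∀ (W : K) {Z Z' : K} (h : Z ⟶ Z'), SPhantom E h → SPhantom E (W ◁ h)

/-- `E` is closed under `hom(W,-)` for all `W`, expressed on the ideal of
`E`-phantoms. -/
def HomClosedClass [MonoidalClosed K] (E : Set (Triangle K)) : Prop :=
  ∀ (W : K) {Z Z' : K} (h : Z ⟶ Z'), SPhantom E h → SPhantom E ((ihom W).map h)

/-- A model of the relative stable category together with its symmetric monoidal
structure, for which the quotient functor is monoidal. -/
structure MonoidalStableModel (E : Set (Triangle K)) extends StableModel E where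
  [monS : MonoidalCategory S]
  [symmS : SymmetricCategory S]
  [πMon : π.Monoidal]

attribute [instance] MonoidalStableModel.monS MonoidalStableModel.symmS
  MonoidalStableModel.πMon

/-- The class of `B`-split triangles: distinguished triangles whose third map is
killed by `B ⊗ -`. -/
def BSplit (B : K) : Set (Triangle K) :=
  {T | T ∈ (distTriang K) ∧ B ◁ T.mor₃ = 0}

/-- The tensor multiples `B ⊗ K` of an object `B`. -/
def tensMultiples (B : K) : Set K := {Y | ∃ Z : K, Nonempty (Y ≅ B ⊗ Z)}

/-- Tensor powers of an object. -/
def tpow (B : K) : ℕ → K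
  | 0 => 𝟙_ K
  | (n + 1) => B ⊗ tpow B n

end TTK


set_option linter.unusedSectionVars false

section Aux

variable [HasBinaryBiproducts K]

/-- Auxiliary: `Q` sees every `E`-phantom (third map of a triangle of `E`) as zero. -/
def Phi (E : Set (Triangle K)) (Q : K) : Prop :=
  ∀ T ∈ E, ∀ c : Q ⟶ T.obj₃, c ≫ T.mor₃ = 0

/-- Auxiliary: every `E`-phantom composed with a map into `I` is zero. -/
def Psi (E : Set (Triangle K)) (I : K) : Prop :=
  ∀ T ∈ E, ∀ e : (T.obj₁⟦(1:ℤ)⟧ : K) ⟶ I, T.mor₃ ≫ e = 0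

variable {E : Set (Triangle K)}

lemma sphantom_mor₃ {T : Triangle K} (hT : T ∈ E) : SPhantom E T.mor₃ :=
  ⟨T.obj₁, T.obj₂, T.mor₁, T.mor₂, T.mor₃, Iso.refl _, hT, by simp⟩

lemma sphantom_comp_iso {Z Z' Z'' : K} {k : Z ⟶ Z'} (hk : SPhantom E k) (j : Z' ≅ Z'') :
    SPhantom E (k ≫ j.hom) := by
  obtain ⟨X, Y, f, g, h', e, hT, heq⟩ := hk
  exact ⟨X, Y, f, g, h', e ≪≫ j, hT, by rw [heq]; simp⟩

lemma sphantom_zero (hE : IsProperClass E) (Z Z' : K) : SPhantom E (0 : Z ⟶ Z') := by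
  have hS : sumTriangle (contractibleTriangle ((Z'⟦(-1:ℤ)⟧ : K)))
      (Triangle.mk (0 : (0 : K) ⟶ Z) (𝟙 Z) (0 : Z ⟶ ((0 : K)⟦(1:ℤ)⟧))) ∈ E :=
    hE.sum_closed _ _ (hE.contractible₁ _) (hE.contractible₂ Z)
  set S : Triangle K := sumTriangle (contractibleTriangle ((Z'⟦(-1:ℤ)⟧ : K)))
      (Triangle.mk (0 : (0 : K) ⟶ Z) (𝟙 Z) (0 : Z ⟶ ((0 : K)⟦(1:ℤ)⟧))) with hSdef
  have hinl : (biprod.inl : (0 : K) ⟶ (0 : K) ⊞ Z) = 0 :=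
    (Limits.isZero_zero K).eq_of_src _ _
  have hinr : (biprod.inr : (0 : K) ⟶ (Z'⟦(-1:ℤ)⟧ : K) ⊞ (0 : K)) = 0 :=
    (Limits.isZero_zero K).eq_of_src _ _
  have hmor₃ : S.mor₃ = 0 := by
    rw [hSdef]
    dsimp [sumTriangle, contractibleTriangle]
    apply biprod.hom_ext'
    · erw [biprod.inl_desc]; exact zero_comp.trans comp_zero.symm
    · erw [biprod.inr_desc]; exact zero_comp.trans comp_zero.symm
  -- iso of third objects
  let j : ((0 : K) ⊞ Z) ≅ Z :=
    { hom := biprod.snd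
      inv := biprod.inr
      hom_inv_id := by apply biprod.hom_ext' <;> simp [hinl]
      inv_hom_id := by simp }
  have hobj₃ : S.obj₃ = ((0 : K) ⊞ Z) := rfl
  let S' : Triangle K := Triangle.mk S.mor₁ (S.mor₂ ≫ j.hom) (0 : Z ⟶ (S.obj₁⟦(1:ℤ)⟧))
  have hS' : S' ∈ E := by
    refine hE.iso_closed S S' (Triangle.isoMk S S' (Iso.refl _) (Iso.refl _) j ?_ ?_ ?_) hS
    · exact (Category.comp_id _).trans (Category.id_comp _).symm
    · exact (Category.id_comp _).symm
    · rw [hmor₃, zero_comp]; exact (comp_zero (f := j.hom)).symm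
  -- the iso (S.obj₁)⟦1⟧ ≅ Z'
  let j₁ : ((Z'⟦(-1:ℤ)⟧ : K) ⊞ (0 : K)) ≅ (Z'⟦(-1:ℤ)⟧ : K) :=
    { hom := biprod.fst
      inv := biprod.inl
      hom_inv_id := by apply biprod.hom_ext' <;> simp [hinr]
      inv_hom_id := by simp }
  let e : ((S.obj₁⟦(1:ℤ)⟧ : K) ≅ Z') :=
    (shiftFunctor K (1:ℤ)).mapIso j₁ ≪≫
      (shiftFunctorCompIsoId K (-1:ℤ) (1:ℤ) (by norm_num)).app Z'
  exact ⟨S.obj₁, S.obj₂, S'.mor₁, S'.mor₂, S'.mor₃, e, hS', by simp [S']⟩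

lemma sphantom_precomp (hE : IsProperClass E) {Q Z Z' : K} (w : Q ⟶ Z) {k : Z ⟶ Z'}
    (hk : SPhantom E k) : SPhantom E (w ≫ k) := by
  obtain ⟨X, Y, f, g, h, e, hT, rfl⟩ := hk
  have hg : SEpi E g := ⟨X, f, h, hT⟩
  obtain ⟨W, w₁, v, hWdist⟩ := Pretriangulated.distinguished_cocone_triangle₁ (biprod.desc g w)
  have hsnd : SEpi E (w₁ ≫ biprod.snd) := hE.epi_pullback g hg w W w₁ v hWdist
  have h12 : w₁ ≫ biprod.desc g w = 0 :=
    comp_distTriang_mor_zero₁₂ _ hWdist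
  have hgh : g ≫ h = 0 := comp_distTriang_mor_zero₂₃ _ (hE.subset_dist _ hT)
  have key : (w₁ ≫ biprod.snd) ≫ (w ≫ (h ≫ e.hom)) = 0 := by
    have hsum : w₁ ≫ biprod.fst ≫ g + w₁ ≫ biprod.snd ≫ w = 0 := by
      rw [← Preadditive.comp_add, ← biprod.desc_eq]; exact h12
    rw [add_eq_zero_iff_eq_neg] at hsum
    have h2 : w₁ ≫ biprod.snd ≫ w = -(w₁ ≫ biprod.fst ≫ g) := by rw [hsum, neg_neg]
    calc (w₁ ≫ biprod.snd) ≫ (w ≫ (h ≫ e.hom))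
        = (w₁ ≫ biprod.snd ≫ w) ≫ (h ≫ e.hom) := by simp only [Category.assoc]
      _ = (-(w₁ ≫ biprod.fst ≫ g)) ≫ (h ≫ e.hom) := by rw [h2]
      _ = -(w₁ ≫ biprod.fst ≫ g ≫ (h ≫ e.hom)) := by
          simp only [Preadditive.neg_comp, Category.assoc]
      _ = 0 := by rw [← Category.assoc g, hgh]; simp
  apply hE.saturated _ hsnd
  rw [key]
  exact sphantom_zero hE _ _

lemma phi_of_eprojective (hE : IsProperClass E) {P : K} (hP : EProjective E P) : Phi E P := by
  intro T hT c
  obtain ⟨b, hb⟩ := (hP T hT).2.2 c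
  rw [← hb, Category.assoc, comp_distTriang_mor_zero₂₃ _ (hE.subset_dist T hT), comp_zero]

lemma phi_shift_of_eprojective (hE : IsProperClass E) {P : K} (hP : EProjective E P) :
    Phi E ((P⟦(1:ℤ)⟧ : K)) := by
  intro T hT d
  obtain ⟨a, ha⟩ := (shiftFunctor K (1:ℤ)).map_surjective (d ≫ T.mor₃)
  have h1 : a ≫ T.mor₁ = 0 := by
    apply (shiftFunctor K (1:ℤ)).map_injective
    rw [Functor.map_comp, ha, Category.assoc,
      comp_distTriang_mor_zero₃₁ _ (hE.subset_dist T hT), comp_zero, Functor.map_zero]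
  have h2 := (hP T hT).1 a h1
  rw [← ha, h2, Functor.map_zero]

lemma phi_of_iso {Q Q' : K} (e : Q' ≅ Q) (h : Phi E Q) : Phi E Q' := by
  intro T hT c
  have h2 := h T hT (e.inv ≫ c)
  have h3 : e.hom ≫ (e.inv ≫ c) ≫ T.mor₃ = 0 := by rw [h2, comp_zero]
  simpa using h3

lemma eprojective_of_phi (hE : IsProperClass E) {Q : K} (h1 : Phi E Q)
    (h2 : Phi E ((Q⟦(1:ℤ)⟧ : K))) : EProjective E Q := by
  intro T hT
  have hTd := hE.subset_dist T hT
  refine ⟨?_, ?_, ?_⟩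
  · intro a ha
    obtain ⟨d, hd⟩ := Pretriangulated.Triangle.coyoneda_exact₁ T hTd
      ((shiftFunctor K (1:ℤ)).map a) (by rw [← Functor.map_comp, ha, Functor.map_zero])
    apply (shiftFunctor K (1:ℤ)).map_injective
    rw [hd, h2 T hT d, Functor.map_zero]
  · intro b hb
    obtain ⟨a, ha⟩ := Pretriangulated.Triangle.coyoneda_exact₂ T hTd b hb
    exact ⟨a, ha.symm⟩
  · intro c
    obtain ⟨b, hb⟩ := Pretriangulated.Triangle.coyoneda_exact₃ T hTd c (h1 T hT c)
    exact ⟨b, hb.symm⟩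

lemma psi_of_einjective (hE : IsProperClass E) {I : K} (hI : EInjective E I) : Psi E I := by
  intro T hT e
  exact (hI T hT).1 _ (by rw [← Category.assoc,
    comp_distTriang_mor_zero₂₃ _ (hE.subset_dist T hT), zero_comp])

lemma psi_shift_of_einjective (hE : IsProperClass E) {I : K} (hI : EInjective E I) :
    Psi E ((I⟦(1:ℤ)⟧ : K)) := by
  intro T hT e
  obtain ⟨e', he'⟩ := (shiftFunctor K (1:ℤ)).map_surjective e
  obtain ⟨b, hb⟩ := (hI T hT).2.2 e'
  rw [← he', ← hb, Functor.map_comp, ← Category.assoc,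
    comp_distTriang_mor_zero₃₁ _ (hE.subset_dist T hT), zero_comp]

lemma ext_from_obj₁ {T : Triangle K} (hT : T ∈ distTriang K) {I : K} (u : T.obj₁ ⟶ I)
    (hu : T.mor₃ ≫ (shiftFunctor K (1:ℤ)).map u = 0) : ∃ b : T.obj₂ ⟶ I, T.mor₁ ≫ b = u := by
  have hT2 := Pretriangulated.rot_of_distTriang _ (Pretriangulated.rot_of_distTriang _ hT)
  obtain ⟨g, hg⟩ := Pretriangulated.Triangle.yoneda_exact₂ _ hT2
    ((shiftFunctor K (1:ℤ)).map u) (by dsimp [Triangle.rotate] at *; exact hu)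
  obtain ⟨b', hb'⟩ : ∃ b' : T.obj₂ ⟶ I, (shiftFunctor K (1:ℤ)).map b' = g :=
    (shiftFunctor K (1:ℤ)).map_surjective g
  refine ⟨-b', ?_⟩
  apply (shiftFunctor K (1:ℤ)).map_injective
  rw [Functor.map_comp, Functor.map_neg, hg, ← hb']
  dsimp [Triangle.rotate]
  simp only [Preadditive.neg_comp, Preadditive.comp_neg, neg_neg]
  exact (Preadditive.neg_comp ((shiftFunctor K (1:ℤ)).map T.mor₁) ((shiftFunctor K (1:ℤ)).map b')).symm

lemma einjective_of_psi (hE : IsProperClass E) {I : K} (h1 : Psi E I)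
    (h2 : Psi E ((I⟦(1:ℤ)⟧ : K))) : EInjective E I := by
  intro T hT
  have hTd := hE.subset_dist T hT
  refine ⟨?_, ?_, ?_⟩
  · intro a ha
    obtain ⟨e, he⟩ := Pretriangulated.Triangle.yoneda_exact₃ T hTd a ha
    rw [he, h1 T hT e]
  · intro b hb
    obtain ⟨a, ha⟩ := Pretriangulated.Triangle.yoneda_exact₂ T hTd b hb
    exact ⟨a, ha.symm⟩
  · intro c
    exact ext_from_obj₁ hTd c (h2 T hT _)

section Monoidal

open MonoidalCategory MonoidalClosed

variable [MonoidalCategory K] [MonoidalPreadditive K] [MonoidalClosed K]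

lemma curry_zero' (W X Y : K) : (curry (0 : W ⊗ X ⟶ Y)) = 0 := by
  have h1 : (uncurry (0 : X ⟶ (ihom W).obj Y)) = 0 := by
    rw [uncurry_eq]
    simp
  have h2 := curry_uncurry (0 : X ⟶ (ihom W).obj Y)
  rw [h1] at h2
  exact h2

lemma uncurry_zero' (W X Y : K) : (uncurry (0 : X ⟶ (ihom W).obj Y)) = 0 := by
  rw [uncurry_eq]; simp

lemma phi_tensor (hhc : HomClosedClass E) {Q : K} (hQ : Phi E Q) (W : K) :
    Phi E (W ⊗ Q) := by
  intro T hT c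
  obtain ⟨X', Y', f', g', h', e', hT', heq⟩ := hhc W T.mor₃ (sphantom_mor₃ hT)
  have hc : curry c ≫ h' = 0 := hQ _ hT' (curry c)
  have hz : curry (c ≫ T.mor₃) = 0 := by
    rw [curry_natural_right, heq, ← Category.assoc, hc, zero_comp]
  have := congrArg uncurry hz
  rwa [uncurry_curry, uncurry_zero'] at this

lemma psi_ihom (htc : TensorClosedClass E) {I : K} (hI : Psi E I) (W : K) :
    Psi E ((ihom W).obj I) := by
  intro T hT e
  obtain ⟨X', Y', f', g', h', e', hT', heq⟩ := htc W T.mor₃ (sphantom_mor₃ hT)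
  have hz : uncurry (T.mor₃ ≫ e) = 0 := by
    rw [uncurry_natural_left, heq, Category.assoc]
    exact hI _ hT' (e'.hom ≫ uncurry e)
  have := congrArg curry hz
  rwa [curry_uncurry, curry_zero'] at this

lemma eprojective_tensor (hE : IsProperClass E) (hhc : HomClosedClass E) {P : K}
    (hP : EProjective E P) (W : K)
    (eiso : (((W ⊗ P)⟦(1:ℤ)⟧ : K)) ≅ W ⊗ ((P⟦(1:ℤ)⟧ : K))) : EProjective E (W ⊗ P) :=
  eprojective_of_phi hE (phi_tensor hhc (phi_of_eprojective hE hP) W)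
    (phi_of_iso eiso (phi_tensor hhc (phi_shift_of_eprojective hE hP) W))

lemma einjective_ihom (hE : IsProperClass E) (htc : TensorClosedClass E) {I : K}
    (hI : EInjective E I) (W : K) (cLW : (tensorLeft W).CommShift ℤ)
    (hmap : ∀ T ∈ distTriang K, mapTri (tensorLeft W) cLW T ∈ distTriang K) :
    EInjective E ((ihom W).obj I) := by
  apply einjective_of_psi hE (psi_ihom htc (psi_of_einjective hE hI) W)
  intro T hT e
  obtain ⟨e', rfl⟩ := (shiftFunctor K (1:ℤ)).map_surjective e
  have hT'd : mapTri (tensorLeft W) cLW T ∈ distTriang K := hmap T (hE.subset_dist T hT)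
  obtain ⟨X', Y', f', g', h', eiso, hTE, heq⟩ := htc W T.mor₃ (sphantom_mor₃ hT)
  have hzero : (mapTri (tensorLeft W) cLW T).mor₃ ≫
      (shiftFunctor K (1:ℤ)).map (uncurry e') = 0 := by
    have hdef : (mapTri (tensorLeft W) cLW T).mor₃
        = (W ◁ T.mor₃) ≫ ((Functor.CommShift.commShiftIso (self := cLW) (tensorLeft W) (1:ℤ)).hom.app T.obj₁) := rfl
    rw [hdef, heq]
    erw [Category.assoc, Category.assoc]
    exact psi_shift_of_einjective hE hI _ hTE
      (eiso.hom ≫ (Functor.CommShift.commShiftIso (self := cLW) (tensorLeft W) (1:ℤ)).hom.app T.obj₁ ≫ (shiftFunctor K (1:ℤ)).map (uncurry e'))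
  obtain ⟨B, hB⟩ := ext_from_obj₁ hT'd (uncurry e') hzero
  have hcb : T.mor₁ ≫ curry B = e' := by
    have : (W ◁ T.mor₁) ≫ B = uncurry e' := hB
    rw [← curry_natural_left _ B, this, curry_uncurry]
  rw [← hcb, Functor.map_comp, ← Category.assoc,
    comp_distTriang_mor_zero₃₁ _ (hE.subset_dist T hT), zero_comp]

lemma homClosed_of_proj (hE : IsProperClass E) (hep : EnoughProjectives E)
    (hproj : ∀ P W : K, EProjective E P → EProjective E (W ⊗ P)) : HomClosedClass E := by
  intro W Z Z' h hph
  obtain ⟨P, p, hP, hpe⟩ := hep ((ihom W).obj Z)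
  refine hE.saturated p hpe _ ?_
  obtain ⟨X, Y, f, g, h₃, e, hT, rfl⟩ := hph
  have h0 : uncurry p ≫ h₃ = 0 :=
    phi_of_eprojective hE (hproj P W hP) _ hT (uncurry p)
  have h1 : p ≫ (ihom W).map h₃ = 0 := by
    have h2 := curry_natural_right (uncurry p) h₃
    rw [h0, curry_zero', curry_uncurry] at h2
    exact h2.symm
  have h3 : p ≫ (ihom W).map (h₃ ≫ e.hom) = 0 := by
    rw [Functor.map_comp, ← Category.assoc, h1, zero_comp]
  rw [h3]
  exact sphantom_zero hE _ _

lemma tensorClosed_of_inj (hE : IsProperClass E) (hei : EnoughInjectives E)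
    (hinj : ∀ I W : K, EInjective E I → EInjective E ((ihom W).obj I))
    (cL : ∀ X : K, (tensorLeft X).CommShift ℤ)
    (hmap : ∀ X : K, ∀ T ∈ distTriang K, mapTri (tensorLeft X) (cL X) T ∈ distTriang K) :
    TensorClosedClass E := by
  intro W Z Z' h hph
  obtain ⟨X, Y, f, g, h₃, e, hT, rfl⟩ := hph
  rw [MonoidalCategory.whiskerLeft_comp]
  have main : SPhantom E (W ◁ h₃) := by
    have hT'd : mapTri (tensorLeft W) (cL W) (Triangle.mk f g h₃) ∈ distTriang K :=
      hmap W _ (hE.subset_dist _ hT)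
    obtain ⟨I, i, hI, hiM⟩ := hei (W ⊗ X)
    obtain ⟨b', hb'⟩ := ((hinj I W hI) _ hT).2.2 (curry i)
    have hb'' : f ≫ b' = curry i := hb'
    have hcomm : (mapTri (tensorLeft W) (cL W) (Triangle.mk f g h₃)).mor₁ ≫ uncurry b'
        = 𝟙 (W ⊗ X) ≫ i := by
      rw [Category.id_comp]
      have hnat : (W ◁ f) ≫ uncurry b' = uncurry (f ≫ b') := (uncurry_natural_left f b').symm
      exact hnat.trans (by rw [hb'', uncurry_curry])
    obtain ⟨C, gI, dI, hTi⟩ := hiM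
    obtain ⟨c, -, hc₂⟩ := Pretriangulated.complete_distinguished_triangle_morphism
      (mapTri (tensorLeft W) (cL W) (Triangle.mk f g h₃)) (Triangle.mk i gI dI)
      hT'd (hE.subset_dist _ hTi) (𝟙 (W ⊗ X)) (uncurry b') hcomm
    have hc₂' : (mapTri (tensorLeft W) (cL W) (Triangle.mk f g h₃)).mor₃ ≫
        (shiftFunctor K (1:ℤ)).map (𝟙 ((tensorLeft W).obj X)) = c ≫ dI := hc₂
    have h5 : (mapTri (tensorLeft W) (cL W) (Triangle.mk f g h₃)).mor₃ ≫
        (shiftFunctor K (1:ℤ)).map (𝟙 ((tensorLeft W).obj X))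
        = (mapTri (tensorLeft W) (cL W) (Triangle.mk f g h₃)).mor₃ := by
      have h6 : (shiftFunctor K (1:ℤ)).map (𝟙 ((tensorLeft W).obj X))
          = 𝟙 ((shiftFunctor K (1:ℤ)).obj ((tensorLeft W).obj X)) :=
        CategoryTheory.Functor.map_id _ _
      erw [h6]
      exact Category.comp_id _
    have hmor₃ : (mapTri (tensorLeft W) (cL W) (Triangle.mk f g h₃)).mor₃ = c ≫ dI :=
      h5.symm.trans hc₂'
    have hph' : SPhantom E ((mapTri (tensorLeft W) (cL W) (Triangle.mk f g h₃)).mor₃) := by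
      rw [hmor₃]
      exact sphantom_precomp hE c (sphantom_mor₃ hTi)
    have hW : W ◁ h₃ = (mapTri (tensorLeft W) (cL W) (Triangle.mk f g h₃)).mor₃
        ≫ (Functor.CommShift.commShiftIso (self := cL W) (tensorLeft W) (1:ℤ)).inv.app X := by
      rw [show (mapTri (tensorLeft W) (cL W) (Triangle.mk f g h₃)).mor₃
        = (W ◁ h₃) ≫ (Functor.CommShift.commShiftIso (self := cL W) (tensorLeft W) (1:ℤ)).hom.app X from rfl]
      erw [Category.assoc, Iso.hom_inv_id_app]
      exact (Category.comp_id _).symm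
    rw [hW]
    exact sphantom_comp_iso hph' ((Functor.CommShift.commShiftIso (self := cL W) (tensorLeft W) (1:ℤ)).symm.app X)
  exact sphantom_comp_iso main (whiskerLeftIso W e)

lemma factorsThroughProj_whisker [SymmetricCategory K]
    (hproj : ∀ P W : K, EProjective E P → EProjective E (W ⊗ P))
    {X Y : K} (f : X ⟶ Y) (W : K) (hf : FactorsThroughProj E f) :
    FactorsThroughProj E (W ◁ f) ∧ FactorsThroughProj E (f ▷ W) := by
  obtain ⟨P, a, b, hP, rfl⟩ := hf
  constructor
  · exact ⟨W ⊗ P, W ◁ a, W ◁ b, hproj P W hP, by rw [← MonoidalCategory.whiskerLeft_comp]⟩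
  · refine ⟨W ⊗ P, (β_ X W).hom ≫ (W ◁ a), (W ◁ b) ≫ (β_ Y W).inv, hproj P W hP, ?_⟩
    have key : (β_ X W).hom ≫ W ◁ (a ≫ b) ≫ (β_ Y W).inv = (a ≫ b) ▷ W := by
      rw [← Category.assoc, ← BraidedCategory.braiding_naturality_left (a ≫ b) W,
        Category.assoc, Iso.hom_inv_id, Category.comp_id]
    simpa only [MonoidalCategory.whiskerLeft_comp, Category.assoc] using key

lemma factorsThroughInj_ihom
    (hinj : ∀ I W : K, EInjective E I → EInjective E ((ihom W).obj I))
    {X Y : K} (f : X ⟶ Y) (W : K) (hf : FactorsThroughInj E f) :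
    FactorsThroughInj E ((ihom W).map f) := by
  obtain ⟨I, a, b, hI, rfl⟩ := hf
  exact ⟨(ihom W).obj I, (ihom W).map a, (ihom W).map b, hinj I W hI,
    by rw [← Functor.map_comp]⟩

end Monoidal

end Aux

open MonoidalCategory in
/-- Lemma 7.8: if the proper class `E` is hom-closed then `proj(E)` is closed under
tensoring (and the ideal of maps factoring through `proj(E)` is tensor-closed); dually,
if `E` is tensor-closed then `inj(E)` is hom-closed (and the corresponding ideal is
hom-closed). Given enough projectives (respectively injectives) these implications are
equivalences. -/
theorem statement14 {K : Type u} [Category.{v} K] [Preadditive K] [HasZeroObject K]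
    [HasShift K ℤ] [∀ n : ℤ, (shiftFunctor K n).Additive] [Pretriangulated K]
    [HasBinaryBiproducts K] [MonoidalCategory K] [SymmetricCategory K] [MonoidalPreadditive K] [MonoidalClosed K]
    (htt : TensorTriangulatedOn K)
    (E : Set (Triangle K)) (hE : IsProperClass E) :
    (HomClosedClass E →
      (∀ P W : K, EProjective E P → EProjective E (W ⊗ P)) ∧
      (∀ {X Y : K} (f : X ⟶ Y) (W : K), FactorsThroughProj E f →
        FactorsThroughProj E (W ◁ f) ∧ FactorsThroughProj E (f ▷ W))) ∧
    (TensorClosedClass E →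
      (∀ I W : K, EInjective E I → EInjective E ((ihom W).obj I)) ∧
      (∀ {X Y : K} (f : X ⟶ Y) (W : K), FactorsThroughInj E f →
        FactorsThroughInj E ((ihom W).map f))) ∧
    (EnoughProjectives E →
      (HomClosedClass E ↔ ∀ P W : K, EProjective E P → EProjective E (W ⊗ P))) ∧
    (EnoughInjectives E →
      (TensorClosedClass E ↔ ∀ I W : K, EInjective E I → EInjective E ((ihom W).obj I))) := by
  obtain ⟨cL, cR, hLd, hRd, -⟩ := htt
  have hproj1 : HomClosedClass E → ∀ P W : K, EProjective E P → EProjective E (W ⊗ P) :=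
    fun hhc P W hP => eprojective_tensor hE hhc hP W ((Functor.CommShift.commShiftIso (self := cL W) (tensorLeft W) (1:ℤ)).symm.app P)
  have hinj1 : TensorClosedClass E → ∀ I W : K, EInjective E I → EInjective E ((ihom W).obj I) :=
    fun htc I W hI => einjective_ihom hE htc hI W (cL W) (hLd W)
  refine ⟨fun hhc => ⟨hproj1 hhc, fun f W hf =>
      factorsThroughProj_whisker (hproj1 hhc) f W hf⟩,
    fun htc => ⟨hinj1 htc, fun f W hf => factorsThroughInj_ihom (hinj1 htc) f W hf⟩,
    fun hep => ⟨fun hhc => hproj1 hhc, fun hp => homClosed_of_proj hE hep hp⟩,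
    fun hei => ⟨fun htc => hinj1 htc, fun hi => tensorClosed_of_inj hE hei hi cL hLd⟩⟩

end RelStable
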